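/- Define NMTH-delete Nim positions with an even number n = 2m ≥ 2 of heaps as vectors of n positive integers; a move chooses k ≤ n/2, deletes k heaps, and splits k of the remaining heaps each into two positive parts. With P-positions defined inductively (a position is P iff all options are N; terminal positions are P), a position is a P-position if and only if every heap size is odd. -/

import Mathlib

inductive NPos {α : Type*} (Move : α → α → Prop) : α → Prop
  | intro {p q : α} : Move p q → (∀ r, Move q r → NPos Move r) → NPos Move p

def PPos {α : Type*} (Move : α → α → Prop) (p : α) : Prop :=
  ∀ q, Move p q → NPos Move q

/-- A move of NMTH-delete Nim with `n` heaps: choose `k` with `1 ≤ k` and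
`k ≤ n / 2` (i.e. `2 * k ≤ n`), delete `k` heaps (`d`), and split `k` of the
remaining heaps (recorded in `L` as pairs of positive parts), leaving the
rest (`u`) untouched. -/
def NMTHMove (n : ℕ) (p q : Multiset ℕ) : Prop :=
  ∃ (k : ℕ) (d u : Multiset ℕ) (L : Multiset (ℕ × ℕ)),
    1 ≤ k ∧ 2 * k ≤ n ∧
    Multiset.card d = k ∧ Multiset.card L = k ∧
    (∀ e ∈ L, 0 < e.1 ∧ 0 < e.2) ∧
    p = d + u + L.map (fun e => e.1 + e.2) ∧
    q = u + L.map Prod.fst + L.map Prod.snd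

lemma npos_not_ppos {α : Type*} {Move : α → α → Prop} {p : α} (h : NPos Move p) :
    ¬ PPos Move p := by
  induction h with
  | intro h1 h2 ih =>
    intro hp
    obtain ⟨hqr, hr⟩ := hp _ h1
    exact ih _ hqr hr

lemma exists_le_card (s : Multiset ℕ) (a : ℕ) (h : a ≤ Multiset.card s) :
    ∃ t, t ≤ s ∧ Multiset.card t = a := by
  refine ⟨((s.toList.take a : List ℕ) : Multiset ℕ), ?_, ?_⟩
  · have h1 : ((s.toList.take a : List ℕ) : Multiset ℕ) ≤ (s.toList : Multiset ℕ) := by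
      exact Multiset.coe_le.mpr (s.toList.take_sublist a).subperm
    rwa [Multiset.coe_toList] at h1
  · simp only [Multiset.coe_card, List.length_take, Multiset.length_toList]
    omega

lemma move_props {m : ℕ} {Z q : Multiset ℕ} (hcard : Multiset.card Z = 2 * m)
    (hpos : ∀ x ∈ Z, 0 < x) (hmv : NMTHMove (2 * m) Z q) :
    Multiset.card q = 2 * m ∧ (∀ y ∈ q, 0 < y) ∧ q.sum < Z.sum := by
  obtain ⟨k, d, u, L, hk1, hk2, hd, hL, hLpos, hp, hq⟩ := hmv
  have hcardZ : Multiset.card Z = k + Multiset.card u + k := by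
    rw [hp]; simp [hd, hL]
  refine ⟨?_, ?_, ?_⟩
  · rw [hq]; simp [hL]; omega
  · intro y hy
    rw [hq] at hy
    simp only [Multiset.mem_add, Multiset.mem_map] at hy
    rcases hy with (hy | ⟨e, he, rfl⟩) | ⟨e, he, rfl⟩
    · exact hpos y (by rw [hp]; simp [hy])
    · exact (hLpos e he).1
    · exact (hLpos e he).2
  · have hsum : Z.sum = d.sum + q.sum := by
      rw [hp, hq]
      simp only [Multiset.sum_add]
      have : (L.map (fun e => e.1 + e.2)).sum
          = (L.map Prod.fst).sum + (L.map Prod.snd).sum := by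
        rw [← Multiset.sum_map_add]
      omega
    have hd0 : 0 < d.sum := by
      have hne : d ≠ 0 := by
        intro h0; rw [h0] at hd; simp at hd; omega
      obtain ⟨x, hx⟩ := Multiset.exists_mem_of_ne_zero hne
      have hxZ : x ∈ Z := by rw [hp]; simp [hx]
      calc 0 < x := hpos x hxZ
        _ ≤ d.sum := Multiset.le_sum_of_mem hx
    omega

lemma move_even {n : ℕ} {Z q : Multiset ℕ} (hodd : ∀ x ∈ Z, Odd x)
    (hmv : NMTHMove n Z q) : ∃ y ∈ q, ¬ Odd y := by
  obtain ⟨k, d, u, L, hk1, hk2, hd, hL, hLpos, hp, hq⟩ := hmv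
  have hne : L ≠ 0 := by
    intro h0; rw [h0] at hL; simp at hL; omega
  obtain ⟨e, he⟩ := Multiset.exists_mem_of_ne_zero hne
  have hsum : Odd (e.1 + e.2) := by
    apply hodd
    rw [hp]
    simp only [Multiset.mem_add, Multiset.mem_map]
    exact Or.inr ⟨e, he, rfl⟩
  by_cases h1 : Odd e.1
  · refine ⟨e.2, ?_, ?_⟩
    · rw [hq]; simp only [Multiset.mem_add, Multiset.mem_map]
      exact Or.inr ⟨e, he, rfl⟩
    · simp only [Nat.odd_iff] at *
      omega
  · refine ⟨e.1, ?_, h1⟩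
    rw [hq]; simp only [Multiset.mem_add, Multiset.mem_map]
    exact Or.inl (Or.inr ⟨e, he, rfl⟩)

lemma exists_good_move {m : ℕ} (hm : 1 ≤ m) {Z : Multiset ℕ}
    (hcard : Multiset.card Z = 2 * m) (hpos : ∀ x ∈ Z, 0 < x)
    (hev : ∃ x ∈ Z, ¬ Odd x) :
    ∃ q, NMTHMove (2 * m) Z q ∧ (∀ y ∈ q, Odd y) := by
  classical
  set E := Z.filter (fun x => ¬ Odd x) with hE
  set O := Z.filter (fun x => Odd x) with hO
  have hZ : O + E = Z := Multiset.filter_add_not _ Z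
  have hOE : Multiset.card O + Multiset.card E = 2 * m := by
    rw [← hcard, ← hZ]; simp
  have hEmem : ∀ z ∈ E, ¬ Odd z ∧ 2 ≤ z := by
    intro z hz
    have h1 := Multiset.of_mem_filter hz
    have h2 := hpos z (Multiset.mem_of_mem_filter hz)
    refine ⟨h1, ?_⟩
    simp only [Nat.odd_iff] at h1
    omega
  have hOmem : ∀ z ∈ O, Odd z := fun z hz => Multiset.of_mem_filter hz
  have hE1 : 1 ≤ Multiset.card E := by
    obtain ⟨x, hx, hxe⟩ := hev
    have : x ∈ E := Multiset.mem_filter.mpr ⟨hx, hxe⟩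
    exact Multiset.card_pos.mpr (fun h0 => by simp [h0] at this)
  set j := Multiset.card E with hj
  by_cases hjm : j ≤ m
  · -- split all even heaps, delete j odd heaps
    obtain ⟨t, ht, htc⟩ := exists_le_card O j (by omega)
    refine ⟨(O - t) + E.map (fun _ => 1) + E.map (fun z => z - 1),
      ⟨j, t, O - t, E.map (fun z => (1, z - 1)), hE1, by omega, htc, by simp [hj], ?_, ?_, ?_⟩, ?_⟩
    · intro e he
      simp only [Multiset.mem_map] at he
      obtain ⟨z, hz, rfl⟩ := he
      have := (hEmem z hz).2
      constructor <;> simp <;> omega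
    · rw [Multiset.map_map]
      have h1 : Multiset.map ((fun e : ℕ × ℕ => e.1 + e.2) ∘ fun z => (1, z - 1)) E = E := by
        apply Multiset.map_congr rfl ?_ |>.trans (Multiset.map_id E)
        intro z hz
        have := (hEmem z hz).2
        simp; omega
      rw [h1, add_tsub_cancel_of_le ht, hZ]
    · rw [Multiset.map_map, Multiset.map_map]
      rfl
    · intro y hy
      simp only [Multiset.mem_add, Multiset.mem_map] at hy
      rcases hy with (hy | ⟨z, hz, rfl⟩) | ⟨z, hz, rfl⟩
      · exact hOmem y (Multiset.mem_of_le (tsub_le_self) hy)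
      · exact odd_one
      · have := hEmem z hz
        simp only [Nat.odd_iff] at *
        omega
  · -- split m even heaps, delete everything else
    obtain ⟨S, hS, hSc⟩ := exists_le_card E m (by omega)
    have hSZ : S ≤ Z := le_trans hS (by rw [← hZ]; exact Multiset.le_add_left E O)
    have hSmem : ∀ z ∈ S, ¬ Odd z ∧ 2 ≤ z := fun z hz => hEmem z (Multiset.mem_of_le hS hz)
    refine ⟨0 + S.map (fun _ => 1) + S.map (fun z => z - 1),
      ⟨m, Z - S, 0, S.map (fun z => (1, z - 1)), hm, le_rfl, ?_, by simp [hSc], ?_, ?_, ?_⟩, ?_⟩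
    · rw [Multiset.card_sub hSZ]; omega
    · intro e he
      simp only [Multiset.mem_map] at he
      obtain ⟨z, hz, rfl⟩ := he
      have := (hSmem z hz).2
      constructor <;> simp <;> omega
    · rw [Multiset.map_map, add_zero]
      have h1 : Multiset.map ((fun e : ℕ × ℕ => e.1 + e.2) ∘ fun z => (1, z - 1)) S = S := by
        apply Multiset.map_congr rfl ?_ |>.trans (Multiset.map_id S)
        intro z hz
        have := (hSmem z hz).2
        simp; omega
      rw [h1, tsub_add_cancel_of_le hSZ]
    · rw [Multiset.map_map, Multiset.map_map]
      rfl
    · intro y hy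
      simp only [Multiset.mem_add, Multiset.mem_map, zero_add] at hy
      rcases hy with ⟨z, hz, rfl⟩ | ⟨z, hz, rfl⟩
      · exact odd_one
      · have := hSmem z hz
        simp only [Nat.odd_iff] at *
        omega

theorem stmt11 (m : ℕ) (hm : 1 ≤ m) (Z : Multiset ℕ)
    (hcard : Multiset.card Z = 2 * m) (hpos : ∀ x ∈ Z, 0 < x) :
    PPos (NMTHMove (2 * m)) Z ↔ ∀ x ∈ Z, Odd x := by
  have H : ∀ s (Z : Multiset ℕ), Z.sum ≤ s → Multiset.card Z = 2 * m →
      (∀ x ∈ Z, 0 < x) →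
      ((∀ x ∈ Z, Odd x) → PPos (NMTHMove (2 * m)) Z) ∧
      ((∃ x ∈ Z, ¬ Odd x) → NPos (NMTHMove (2 * m)) Z) := by
    intro s
    induction s using Nat.strong_induction_on with
    | _ s ih =>
      intro Z hsum hcardZ hposZ
      constructor
      · intro hodd q hmq
        obtain ⟨hq1, hq2, hq3⟩ := move_props hcardZ hposZ hmq
        have hev := move_even hodd hmq
        exact (ih q.sum (by omega) q le_rfl hq1 hq2).2 hev
      · intro hev
        obtain ⟨q, hmq, hqodd⟩ := exists_good_move hm hcardZ hposZ hev
        obtain ⟨hq1, hq2, hq3⟩ := move_props hcardZ hposZ hmq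
        have hPq := (ih q.sum (by omega) q le_rfl hq1 hq2).1 hqodd
        exact NPos.intro hmq hPq
  constructor
  · intro hP
    by_contra h
    push_neg at h
    exact npos_not_ppos ((H Z.sum Z le_rfl hcard hpos).2 h) hP
  · intro hodd
    exact (H Z.sum Z le_rfl hcard hpos).1 hodd
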